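/- In the SSFS model with intersection bonus, for every n and every T ≥ 3 there exists a deterministic online algorithm that is 2/(1 − 1/(T−1))-competitive, i.e., its output sequence on every SSFS intersection-bonus instance with T time steps has value at least (1 − 1/(T−1))/2 times OPT. In particular the algorithm that at each time t chooses a feasible solution maximizing the modified profit p'_t (equal to p_1(S)+|S| at t = 1, to p_t(S)+|S ∩ S_{t−1}|+|S| for 2 ≤ t ≤ T−1, and to p_T(S)+|S ∩ S_{T−1}| at t = T) achieves this guarantee. -/

import Mathlib

/-- The value of a solution sequence under the intersection bonus: total profit
plus, for each pair of consecutive steps, the size of the intersection of the two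
solutions. -/
noncomputable def intVal (n T : ℕ) (p : ℕ → Finset (Fin n) → ℝ)
    (S : ℕ → Finset (Fin n)) : ℝ :=
  (∑ t ∈ Finset.range T, p t (S t)) +
    ∑ t ∈ Finset.range (T - 1), ((S t ∩ S (t + 1)).card : ℝ)

/-- A valid multistage instance: the empty set is feasible at every time step and
profits are nonnegative. -/
def ValidInstance (n T : ℕ) (F : ℕ → Set (Finset (Fin n)))
    (p : ℕ → Finset (Fin n) → ℝ) : Prop :=
  (∀ t, t < T → (∅ : Finset (Fin n)) ∈ F t) ∧ ∀ t, t < T → ∀ S, 0 ≤ p t S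

/-- A solution sequence: feasible at every time step. -/
def IsSol (n T : ℕ) (F : ℕ → Set (Finset (Fin n))) (S : ℕ → Finset (Fin n)) : Prop :=
  ∀ t, t < T → S t ∈ F t

/-- A deterministic online algorithm: the solution output at time `t < T` depends
only on the data `(F_s, p_s)` revealed up to time `s ≤ t`. -/
def IsOnline (n T : ℕ)
    (alg : (ℕ → Set (Finset (Fin n))) → (ℕ → Finset (Fin n) → ℝ) → ℕ → Finset (Fin n)) :
    Prop :=
  ∀ F p F' p', ∀ t, t < T →
    (∀ s, s ≤ t → F s = F' s ∧ p s = p' s) → alg F p t = alg F' p' t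

/-- The sequences produced by the modified-profit greedy algorithm `MP-Algo`
(time steps are indexed `0, …, T-1`): `S 0` maximizes `p 0 S' + |S'|`; for
`1 ≤ t ≤ T-2`, `S t` maximizes `p t S' + |S' ∩ S (t-1)| + |S'|`; and `S (T-1)`
maximizes `p (T-1) S' + |S' ∩ S (T-2)|`, each over feasible `S'`. -/
def MPGreedy (n T : ℕ) (Feas : Set (Finset (Fin n))) (p : ℕ → Finset (Fin n) → ℝ)
    (S : ℕ → Finset (Fin n)) : Prop :=
  (S 0 ∈ Feas ∧ ∀ S' ∈ Feas,
      p 0 S' + (S'.card : ℝ) ≤ p 0 (S 0) + ((S 0).card : ℝ)) ∧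
  (∀ t, 1 ≤ t → t < T - 1 → S t ∈ Feas ∧ ∀ S' ∈ Feas,
      p t S' + ((S' ∩ S (t - 1)).card : ℝ) + (S'.card : ℝ) ≤
        p t (S t) + ((S t ∩ S (t - 1)).card : ℝ) + ((S t).card : ℝ)) ∧
  (S (T - 1) ∈ Feas ∧ ∀ S' ∈ Feas,
      p (T - 1) S' + ((S' ∩ S (T - 2)).card : ℝ) ≤
        p (T - 1) (S (T - 1)) + ((S (T - 1) ∩ S (T - 2)).card : ℝ))

open Finset in
open scoped Classical in
/-- An argmax of `g` over `Feas`, or junk if none exists. -/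
noncomputable def argmaxOn (n : ℕ) (Feas : Set (Finset (Fin n)))
    (g : Finset (Fin n) → ℝ) : Finset (Fin n) :=
  if h : ∃ S ∈ Feas, ∀ S' ∈ Feas, g S' ≤ g S then h.choose else ∅

lemma argmaxOn_spec {n : ℕ} {Feas : Set (Finset (Fin n))} {g : Finset (Fin n) → ℝ}
    (h : Feas.Nonempty) :
    argmaxOn n Feas g ∈ Feas ∧ ∀ S' ∈ Feas, g S' ≤ g (argmaxOn n Feas g) := by
  have hfin : Feas.Finite := Set.toFinite _
  have hne : hfin.toFinset.Nonempty := by simpa using h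
  obtain ⟨S, hS, hmax⟩ := Finset.exists_max_image hfin.toFinset g hne
  have hex : ∃ S ∈ Feas, ∀ S' ∈ Feas, g S' ≤ g S :=
    ⟨S, by simpa using hS, fun S' hS' => hmax S' (by simpa using hS')⟩
  classical
  rw [argmaxOn]
  rw [dif_pos hex]
  exact hex.choose_spec

/-- The modified-profit greedy algorithm. -/
noncomputable def mpAlg (n T : ℕ) (F : ℕ → Set (Finset (Fin n)))
    (p : ℕ → Finset (Fin n) → ℝ) : ℕ → Finset (Fin n)
  | 0 => argmaxOn n (F 0) (fun S => p 0 S + (S.card : ℝ))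
  | (t+1) =>
    if t + 1 < T - 1 then
      argmaxOn n (F (t+1))
        (fun S => p (t+1) S + ((S ∩ mpAlg n T F p t).card : ℝ) + (S.card : ℝ))
    else if t + 1 = T - 1 then
      argmaxOn n (F (t+1))
        (fun S => p (t+1) S + ((S ∩ mpAlg n T F p t).card : ℝ))
    else ∅

lemma mpAlg_agree (n T : ℕ) (F F' : ℕ → Set (Finset (Fin n)))
    (p p' : ℕ → Finset (Fin n) → ℝ) :
    ∀ t, (∀ s, s ≤ t → F s = F' s ∧ p s = p' s) →
      mpAlg n T F p t = mpAlg n T F' p' t := by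
  intro t
  induction t with
  | zero =>
    intro h
    obtain ⟨hF, hp⟩ := h 0 le_rfl
    simp only [mpAlg, hF, hp]
  | succ t ih =>
    intro h
    have hprev := ih (fun s hs => h s (hs.trans (Nat.le_succ t)))
    obtain ⟨hF, hp⟩ := h (t+1) le_rfl
    simp only [mpAlg, hF, hp, hprev]

lemma mpAlg_online (n T : ℕ) : IsOnline n T (mpAlg n T) :=
  fun F p F' p' t _ h => mpAlg_agree n T F F' p p' t h

lemma mpAlg_greedy (n T : ℕ) (hT : 3 ≤ T) (Feas : Set (Finset (Fin n)))
    (p : ℕ → Finset (Fin n) → ℝ) (hne : Feas.Nonempty) :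
    MPGreedy n T Feas p (mpAlg n T (fun _ => Feas) p) := by
  set S := mpAlg n T (fun _ => Feas) p with hSdef
  have h0 : S 0 = argmaxOn n Feas (fun S => p 0 S + (S.card : ℝ)) := by
    rw [hSdef]; rfl
  have hmid : ∀ t, 1 ≤ t → t < T - 1 →
      S t = argmaxOn n Feas
        (fun S' => p t S' + ((S' ∩ S (t-1)).card : ℝ) + (S'.card : ℝ)) := by
    intro t h1 h2
    obtain ⟨k, rfl⟩ : ∃ k, t = k + 1 := ⟨t - 1, by omega⟩
    rw [hSdef]
    show mpAlg n T (fun _ => Feas) p (k+1) = _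
    rw [mpAlg, if_pos h2]
    simp [Nat.add_sub_cancel]
  have hlast : S (T-1) = argmaxOn n Feas
      (fun S' => p (T-1) S' + ((S' ∩ S (T-2)).card : ℝ)) := by
    have hE : T - 1 = (T - 2) + 1 := by omega
    rw [hSdef, hE]
    show mpAlg n T (fun _ => Feas) p ((T-2)+1) = _
    rw [mpAlg, if_neg (by omega), if_pos (by omega)]
  refine ⟨?_, ?_, ?_⟩
  · rw [h0]; exact argmaxOn_spec hne
  · intro t h1 h2
    rw [hmid t h1 h2]
    exact argmaxOn_spec hne
  · rw [hlast]
    exact argmaxOn_spec hne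

lemma greedy_feas (n T : ℕ) (hT : 3 ≤ T) (Feas : Set (Finset (Fin n)))
    (p : ℕ → Finset (Fin n) → ℝ) (S : ℕ → Finset (Fin n))
    (hS : MPGreedy n T Feas p S) : ∀ t, t < T → S t ∈ Feas := by
  intro t ht
  rcases Nat.lt_or_ge t 1 with h | h
  · have : t = 0 := by omega
    rw [this]; exact hS.1.1
  · rcases Nat.lt_or_ge t (T - 1) with h2 | h2
    · exact (hS.2.1 t h h2).1
    · have : t = T - 1 := by omega
      rw [this]; exact hS.2.2.1

open Finset in
lemma mp_bound (n T : ℕ) (hT : 3 ≤ T) (Feas : Set (Finset (Fin n)))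
    (p : ℕ → Finset (Fin n) → ℝ)
    (hvalid : ValidInstance n T (fun _ => Feas) p)
    (S : ℕ → Finset (Fin n)) (hS : MPGreedy n T Feas p S)
    (Shat : ℕ → Finset (Fin n)) (hShat : IsSol n T (fun _ => Feas) Shat) :
    (1 - 1 / ((T : ℝ) - 1)) / 2 * intVal n T p Shat ≤ intVal n T p S := by
  obtain ⟨hempty, hp⟩ := hvalid
  have hSfeas := greedy_feas n T hT Feas p S hS
  have hT1 : T = (T - 1) + 1 := by omega
  have hT2 : T - 1 = (T - 2) + 1 := by omega
  -- splitting lemmas for sums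
  have hsplit : ∀ (x : ℕ → ℝ),
      ∑ t ∈ range T, (if t + 1 < T then x t else 0) = ∑ t ∈ range (T-1), x t := by
    intro x
    rw [hT1, Finset.sum_range_succ, if_neg (by omega), add_zero]
    refine Finset.sum_congr rfl fun i hi => ?_
    rw [if_pos (by simp only [Finset.mem_range] at hi; omega)]
  have hshift : ∀ (y : ℕ → ℝ),
      ∑ t ∈ range T, (if 1 ≤ t then y t else 0) = ∑ i ∈ range (T-1), y (i+1) := by
    intro y
    rw [hT1, Finset.sum_range_succ', if_neg (by omega), add_zero]
    refine Finset.sum_congr rfl fun i _ => ?_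
    rw [if_pos (by omega)]
  -- Lemma G
  have hG : ∀ Q : ℕ → Finset (Fin n), IsSol n T (fun _ => Feas) Q →
      intVal n T p Q ≤ intVal n T p S + ∑ t ∈ range (T-1), ((S t).card : ℝ) := by
    intro Q hQ
    have key : ∀ t ∈ range T,
        p t (Q t) + (if t + 1 < T then ((Q t).card : ℝ) else 0) ≤
          p t (S t) + (if 1 ≤ t then ((S t ∩ S (t-1)).card : ℝ) else 0) +
            (if t + 1 < T then ((S t).card : ℝ) else 0) := by
      intro t htm
      rw [Finset.mem_range] at htm
      split_ifs with hlt hone hone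
      · -- middle: 1 ≤ t, t < T-1
        have := (hS.2.1 t hone (by omega)).2 (Q t) (hQ t htm)
        have hnn : (0:ℝ) ≤ ((Q t ∩ S (t-1)).card : ℝ) := by exact Nat.cast_nonneg _
        linarith
      · -- t = 0
        have ht0 : t = 0 := by omega
        subst ht0
        have := hS.1.2 (Q 0) (hQ 0 htm)
        linarith
      · -- t = T-1
        have ht' : t = T - 1 := by omega
        subst ht'
        have := hS.2.2.2 (Q (T-1)) (hQ (T-1) htm)
        have hnn : (0:ℝ) ≤ ((Q (T-1) ∩ S (T-2)).card : ℝ) := by exact Nat.cast_nonneg _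
        have hE : T - 1 - 1 = T - 2 := by omega
        rw [hE]
        linarith
      · exact absurd htm (by omega)
    have hsum := Finset.sum_le_sum key
    rw [Finset.sum_add_distrib] at hsum
    rw [Finset.sum_add_distrib, Finset.sum_add_distrib] at hsum
    rw [hsplit (fun t => ((Q t).card : ℝ)), hsplit (fun t => ((S t).card : ℝ)),
      hshift (fun t => ((S t ∩ S (t-1)).card : ℝ))] at hsum
    have hB : ∑ i ∈ range (T-1), ((S (i+1) ∩ S (i+1-1)).card : ℝ) =
        ∑ t ∈ range (T-1), ((S t ∩ S (t+1)).card : ℝ) := by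
      refine Finset.sum_congr rfl fun i _ => ?_
      rw [Nat.add_sub_cancel, Finset.inter_comm]
    rw [hB] at hsum
    have hQbonus : ∑ t ∈ range (T-1), ((Q t ∩ Q (t+1)).card : ℝ) ≤
        ∑ t ∈ range (T-1), ((Q t).card : ℝ) := by
      refine Finset.sum_le_sum fun i _ => ?_
      exact_mod_cast Finset.card_le_card (Finset.inter_subset_left)
    unfold intVal
    linarith
  -- Lemma H
  have hH : ∑ t ∈ range (T-1), ((S t).card : ℝ) ≤
      intVal n T p S + ((S (T-2)).card : ℝ) := by
    have keyH : ∀ i ∈ range (T-1),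
        (if i + 1 < T - 1 then 2 * ((S i).card : ℝ) else ((S (T-2)).card : ℝ)) ≤
          p (i+1) (S (i+1)) + ((S (i+1) ∩ S i).card : ℝ) +
            (if i + 1 < T - 1 then ((S (i+1)).card : ℝ) else 0) := by
      intro i him
      rw [Finset.mem_range] at him
      split_ifs with h2
      · have := (hS.2.1 (i+1) (by omega) h2).2 (S i) (hSfeas i (by omega))
        rw [Nat.add_sub_cancel, Finset.inter_self] at this
        have hpnn : 0 ≤ p (i+1) (S i) := hp (i+1) (by omega) (S i)
        linarith
      · have hi : i = T - 2 := by omega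
        subst hi
        have := hS.2.2.2 (S (T-2)) (hSfeas (T-2) (by omega))
        rw [Finset.inter_self] at this
        have hpnn : 0 ≤ p (T-1) (S (T-2)) := hp (T-1) (by omega) (S (T-2))
        have hE1 : T - 2 + 1 = T - 1 := by omega
        rw [hE1]
        linarith
    have hsum := Finset.sum_le_sum keyH
    -- LHS
    have eqL : ∑ i ∈ range (T-1),
        (if i + 1 < T - 1 then 2 * ((S i).card : ℝ) else ((S (T-2)).card : ℝ)) =
        2 * (∑ i ∈ range (T-2), ((S i).card : ℝ)) + ((S (T-2)).card : ℝ) := by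
      rw [hT2, Finset.sum_range_succ, if_neg (by omega), Finset.mul_sum]
      congr 1
      refine Finset.sum_congr rfl fun i hi => ?_
      rw [if_pos (by simp only [Finset.mem_range] at hi; omega)]
    rw [eqL, Finset.sum_add_distrib, Finset.sum_add_distrib] at hsum
    have hPle : ∑ i ∈ range (T-1), p (i+1) (S (i+1)) ≤ ∑ t ∈ range T, p t (S t) := by
      have e : ∑ t ∈ range T, p t (S t) =
          ∑ i ∈ range (T-1), p (i+1) (S (i+1)) + p 0 (S 0) := by
        conv_lhs => rw [hT1]
        rw [Finset.sum_range_succ']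
      have h0' : 0 ≤ p 0 (S 0) := hp 0 (by omega) (S 0)
      rw [e]
      linarith
    have hBeq : ∑ i ∈ range (T-1), ((S (i+1) ∩ S i).card : ℝ) =
        ∑ t ∈ range (T-1), ((S t ∩ S (t+1)).card : ℝ) := by
      refine Finset.sum_congr rfl fun i _ => ?_
      rw [Finset.inter_comm]
    have hCeq : ∑ i ∈ range (T-1), (if i + 1 < T - 1 then ((S (i+1)).card : ℝ) else 0) =
        ∑ i ∈ range (T-2), ((S (i+1)).card : ℝ) := by
      rw [hT2, Finset.sum_range_succ, if_neg (by omega), add_zero]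
      refine Finset.sum_congr rfl fun i hi => ?_
      rw [if_pos (by simp only [Finset.mem_range] at hi; omega)]
    rw [hBeq, hCeq] at hsum
    have hSigma : ∑ t ∈ range (T-1), ((S t).card : ℝ) =
        ∑ i ∈ range (T-2), ((S i).card : ℝ) + ((S (T-2)).card : ℝ) := by
      rw [hT2, Finset.sum_range_succ]
    have hSigma' : ∑ t ∈ range (T-1), ((S t).card : ℝ) =
        ∑ i ∈ range (T-2), ((S (i+1)).card : ℝ) + ((S 0).card : ℝ) := by
      rw [hT2, Finset.sum_range_succ']
    have hnn0 : (0:ℝ) ≤ ((S 0).card : ℝ) := by exact Nat.cast_nonneg _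
    unfold intVal
    linarith
  -- Lemma K
  have hK : ((T:ℝ) - 1) * ((S (T-2)).card : ℝ) ≤
      intVal n T p S + ∑ t ∈ range (T-1), ((S t).card : ℝ) := by
    have hfe : IsSol n T (fun _ => Feas) (fun _ => S (T-2)) :=
      fun t ht => hSfeas (T-2) (by omega)
    have := hG (fun _ => S (T-2)) hfe
    have hval : ((T:ℝ) - 1) * ((S (T-2)).card : ℝ) ≤ intVal n T p (fun _ => S (T-2)) := by
      have e : intVal n T p (fun _ => S (T-2)) =
          (∑ t ∈ range T, p t (S (T-2))) +
            ∑ _t ∈ range (T-1), (((S (T-2)) ∩ (S (T-2))).card : ℝ) := rfl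
      rw [e]
      have h1 : ∑ _t ∈ range (T-1), (((S (T-2)) ∩ (S (T-2))).card : ℝ) =
          ((T:ℝ) - 1) * ((S (T-2)).card : ℝ) := by
        simp only [Finset.inter_self, Finset.sum_const, Finset.card_range, nsmul_eq_mul]
        congr 1
        rw [Nat.cast_sub (by omega : 1 ≤ T), Nat.cast_one]
      have h2 : 0 ≤ ∑ t ∈ range T, p t (S (T-2)) := by
        refine Finset.sum_nonneg fun t ht => ?_
        rw [Finset.mem_range] at ht
        exact hp t ht _
      rw [h1]
      linarith
    linarith
  -- conclusion
  have hf := hG Shat hShat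
  set A := intVal n T p S
  set f := intVal n T p Shat
  set x := ((S (T-2)).card : ℝ)
  set Sig := ∑ t ∈ range (T-1), ((S t).card : ℝ)
  have hx : (0:ℝ) ≤ x := by exact Nat.cast_nonneg _
  have hTr : (3:ℝ) ≤ (T:ℝ) := by exact_mod_cast hT
  have hc : (0:ℝ) < (T:ℝ) - 1 := by linarith
  have hfle : f ≤ 2 * A + x := by linarith
  have hxA : ((T:ℝ) - 2) * x ≤ 2 * A := by linarith
  have key : ((T:ℝ) - 2) * f ≤ 2 * ((T:ℝ) - 1) * A := by
    nlinarith [mul_le_mul_of_nonneg_left hfle (by linarith : (0:ℝ) ≤ (T:ℝ) - 2)]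
  have h1c : (1 - 1 / ((T:ℝ) - 1)) / 2 = ((T:ℝ) - 2) / (2 * ((T:ℝ) - 1)) := by
    field_simp
    ring
  rw [h1c, div_mul_eq_mul_div, div_le_iff₀ (by linarith : (0:ℝ) < 2 * ((T:ℝ) - 1))]
  linarith [key]

/-- In the SSFS model with intersection bonus, for every `n` and every `T ≥ 3`
there is a deterministic online algorithm that is `2/(1 - 1/(T-1))`-competitive,
i.e. its output sequence on every SSFS instance has value at least
`(1 - 1/(T-1))/2` times OPT; in particular, any sequence satisfying the
modified-profit greedy conditions (`MP-Algo`) achieves this guarantee. -/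
theorem stmt3 (n T : ℕ) (hT : 3 ≤ T) :
    (∃ alg : (ℕ → Set (Finset (Fin n))) → (ℕ → Finset (Fin n) → ℝ) → ℕ → Finset (Fin n),
      IsOnline n T alg ∧
      ∀ (Feas : Set (Finset (Fin n))) (p : ℕ → Finset (Fin n) → ℝ),
        ValidInstance n T (fun _ => Feas) p →
        (∀ t, t < T → alg (fun _ => Feas) p t ∈ Feas) ∧
        ∀ S : ℕ → Finset (Fin n), IsSol n T (fun _ => Feas) S →
          (1 - 1 / ((T : ℝ) - 1)) / 2 * intVal n T p S ≤
            intVal n T p (alg (fun _ => Feas) p)) ∧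
    ∀ (Feas : Set (Finset (Fin n))) (p : ℕ → Finset (Fin n) → ℝ),
      ValidInstance n T (fun _ => Feas) p →
      ∀ S : ℕ → Finset (Fin n), MPGreedy n T Feas p S →
        ∀ Shat : ℕ → Finset (Fin n), IsSol n T (fun _ => Feas) Shat →
          (1 - 1 / ((T : ℝ) - 1)) / 2 * intVal n T p Shat ≤ intVal n T p S := by
  refine ⟨⟨mpAlg n T, mpAlg_online n T, ?_⟩, ?_⟩
  · intro Feas p hvalid
    have hne : Feas.Nonempty := ⟨∅, hvalid.1 0 (by omega)⟩
    have hg := mpAlg_greedy n T hT Feas p hne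
    exact ⟨greedy_feas n T hT Feas p _ hg,
      fun Sh hSh => mp_bound n T hT Feas p hvalid _ hg Sh hSh⟩
  · intro Feas p hvalid S hg Shat hSol
    exact mp_bound n T hT Feas p hvalid S hg Shat hSol
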